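/- Let G = (⟨a⟩ × C) ⋊ ⟨b⟩ where a has order 5, b has order 4, a^b = a², C is an elementary abelian 3-group (possibly trivial), and c^b = c⁻¹ for every c ∈ C. Then G is solvable, has a normal Sylow subgroup of order 5, its Gruenberg–Kegel graph is contained in the path 2−3−5 (i.e., G has no elements of order 10 or 15 and no elements of order pq for other prime pairs outside {2,3} and {3,5}), and every element g of G satisfies: every generator of ⟨g⟩ is conjugate in G to g or g⁻¹ (G is a cut group). -/

import Mathlib

open Pointwise

/-- `G` is a cut group: every generator of `⟨g⟩` is conjugate to `g` or `g⁻¹`, for all `g`. -/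
def IsCutGroup (G : Type*) [Group G] : Prop :=
  ∀ g h : G, Subgroup.zpowers h = Subgroup.zpowers g → IsConj g h ∨ IsConj g⁻¹ h

theorem stmt_10 {G : Type} [Group G] [Finite G] (a b : G) (C : Subgroup G)
    (ha : orderOf a = 5) (hb : orderOf b = 4) (hab : b⁻¹ * a * b = a ^ 2)
    (hC3 : ∀ c ∈ C, c ^ 3 = 1)
    (hCcomm : ∀ c ∈ C, ∀ d ∈ C, c * d = d * c)
    (hCb : ∀ c ∈ C, b⁻¹ * c * b = c⁻¹)
    (haC : ∀ c ∈ C, a * c = c * a)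
    (haCdisj : Subgroup.zpowers a ⊓ C = ⊥)
    (hKnormal : (Subgroup.zpowers a ⊔ C).Normal)
    (hKdisj : (Subgroup.zpowers a ⊔ C) ⊓ Subgroup.zpowers b = ⊥)
    (hKtop : (Subgroup.zpowers a ⊔ C) ⊔ Subgroup.zpowers b = ⊤) :
    IsSolvable G ∧
    (∃ P : Sylow 5 G, (P : Subgroup G) = Subgroup.zpowers a ∧ (Subgroup.zpowers a).Normal) ∧
    (∀ p : ℕ, p.Prime → (∃ g : G, orderOf g = p) → p = 2 ∨ p = 3 ∨ p = 5) ∧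
    (∀ p q : ℕ, p.Prime → q.Prime → p < q → (∃ g : G, orderOf g = p * q) →
      (p = 2 ∧ q = 3) ∨ (p = 3 ∧ q = 5)) ∧
    IsCutGroup G := by
  have ha5 : a ^ 5 = 1 := by rw [← ha]; exact pow_orderOf_eq_one a
  have hb4 : b ^ 4 = 1 := by rw [← hb]; exact pow_orderOf_eq_one b
  have hcomm : ∀ c ∈ C, ∀ i : ℤ, Commute (a ^ i) c := fun c hc i =>
    Commute.zpow_left (haC c hc) i
  have haz : ∀ (i : ℤ) (n : ℕ), (a ^ i) ^ n = ((a ^ n : G)) ^ i := fun i n => by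
    rw [← zpow_natCast (a ^ i) n, ← zpow_mul, mul_comm, zpow_mul, zpow_natCast]
  have hazn : ∀ i : ℤ, (a ^ i) ^ (5:ℕ) = 1 := fun i => by rw [haz, ha5, one_zpow]
  have hmul2 : ∀ (i j : ℤ) (c d : G), c ∈ C → d ∈ C →
      (a ^ i * c) * (a ^ j * d) = a ^ (i + j) * (c * d) := by
    intro i j c d hc hd
    calc a^i*c*(a^j*d) = a^i*(c*a^j)*d := by group
      _ = a^i*(a^j*c)*d := by rw [← hcomm c hc j]
      _ = a^(i+j)*(c*d) := by rw [zpow_add]; group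
  set KS : Subgroup G := {
    carrier := {x | ∃ i : ℤ, ∃ c ∈ C, x = a ^ i * c}
    one_mem' := ⟨0, 1, C.one_mem, by simp⟩
    mul_mem' := by
      rintro x y ⟨i, c, hc, rfl⟩ ⟨j, d, hd, rfl⟩
      exact ⟨i + j, c * d, C.mul_mem hc hd, (hmul2 i j c d hc hd)⟩
    inv_mem' := by
      rintro x ⟨i, c, hc, rfl⟩
      refine ⟨-i, c⁻¹, C.inv_mem hc, ?_⟩
      rw [mul_inv_rev, ← zpow_neg]
      exact (hcomm c⁻¹ (C.inv_mem hc) (-i)).symm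
    } with hKSdef
  have hKSmem : ∀ x, x ∈ KS ↔ ∃ i : ℤ, ∃ c ∈ C, x = a ^ i * c := fun x => Iff.rfl
  have hK15 : ∀ x ∈ KS, x ^ (15:ℕ) = 1 := by
    rintro x ⟨i, c, hc, rfl⟩
    rw [(hcomm c hc i).mul_pow]
    rw [show (15:ℕ) = 5*3 from rfl, pow_mul, hazn, one_pow, one_mul,
      show ((c:G) ^ (5*3) = (c^3)^5) from by rw [← pow_mul, mul_comm], hC3 c hc, one_pow]
  have hc2 : ∀ c ∈ C, (c:G)⁻¹ = c ^ 2 := fun c hc =>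
    inv_eq_of_mul_eq_one_right (by rw [← pow_succ']; exact hC3 c hc)
  have hsq : ∀ x ∈ KS, b⁻¹ * x * b = x ^ 2 := by
    rintro x ⟨i, c, hc, rfl⟩
    have e1 : b⁻¹ * a ^ i * b = (a ^ i) ^ 2 := by
      have h := map_zpow (MulAut.conj b⁻¹) a i
      simp only [MulAut.conj_apply, inv_inv] at h
      rw [h, hab, haz]
    calc b⁻¹ * (a ^ i * c) * b = (b⁻¹ * a ^ i * b) * (b⁻¹ * c * b) := by group
      _ = (a ^ i) ^ 2 * c ^ 2 := by rw [e1, hCb c hc, hc2 c hc]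
      _ = (a ^ i * c) ^ 2 := ((hcomm c hc i).mul_pow 2).symm
  have hred : ∀ x ∈ KS, ∀ m : ℕ, x ^ m = x ^ (m % 15) := by
    intro x hx m
    conv_lhs => rw [← Nat.div_add_mod m 15]
    rw [pow_add, pow_mul, hK15 x hx, one_pow, one_mul]
  have h8 : ∀ x ∈ KS, b * x * b⁻¹ = x ^ 8 := by
    intro x hx
    have h' := hsq (x ^ 8) (pow_mem hx 8)
    rw [← pow_mul, show 8*2 = 16 from rfl, show (16:ℕ) = 15+1 from rfl, pow_add,
      hK15 x hx, one_mul, pow_one] at h'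
    calc b * x * b⁻¹ = b * (b⁻¹ * x ^ 8 * b) * b⁻¹ := by rw [h']
      _ = x ^ 8 := by group
  have s1 : ∀ x ∈ KS, b * x = x ^ 8 * b := by
    intro x hx
    calc b * x = (b * x * b⁻¹) * b := by group
      _ = x ^ 8 * b := by rw [h8 x hx]
  have s2 : ∀ x ∈ KS, b ^ 2 * x = x ^ 4 * b ^ 2 := by
    intro x hx
    calc b^2*x = b*(b*x) := by rw [pow_two, mul_assoc]
      _ = b*(x^8*b) := by rw [s1 x hx]
      _ = (b*x^8)*b := by group
      _ = ((x^8)^8*b)*b := by rw [s1 _ (pow_mem hx 8)]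
      _ = (x^8)^8*(b*b) := by rw [mul_assoc]
      _ = x^64*b^2 := by rw [← pow_mul]; norm_num [pow_two]
      _ = x^4*b^2 := by rw [hred x hx 64]
  have s3 : ∀ x ∈ KS, b ^ 3 * x = x ^ 2 * b ^ 3 := by
    intro x hx
    calc b^3*x = b*(b^2*x) := by rw [pow_succ', mul_assoc]
      _ = b*(x^4*b^2) := by rw [s2 x hx]
      _ = (b*x^4)*b^2 := by group
      _ = ((x^4)^8*b)*b^2 := by rw [s1 _ (pow_mem hx 4)]
      _ = (x^4)^8*(b*b^2) := by rw [mul_assoc]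
      _ = x^32*b^3 := by rw [← pow_mul]; norm_num [pow_succ']
      _ = x^2*b^3 := by rw [hred x hx 32]
  have ha_le : Subgroup.zpowers a ≤ KS := by
    rintro z hz
    obtain ⟨i, rfl⟩ := Subgroup.mem_zpowers_iff.mp hz
    exact ⟨i, 1, C.one_mem, (mul_one _).symm⟩
  have hC_le : C ≤ KS := fun z hz => ⟨0, z, hz, by rw [zpow_zero, one_mul]⟩
  -- decomposition
  haveI := hKnormal
  have hdec : ∀ g : G, ∃ x ∈ KS, ∃ j : ℕ, j < 4 ∧ g = x * b ^ j := by
    intro g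
    have hg : g ∈ ((Subgroup.zpowers a ⊔ C) ⊔ Subgroup.zpowers b : Subgroup G) := by
      rw [hKtop]; trivial
    have hg' : g ∈ ((↑(Subgroup.zpowers a ⊔ C) : Set G) * (↑(Subgroup.zpowers b) : Set G)) := by
      rw [← Subgroup.normal_mul]; exact_mod_cast hg
    obtain ⟨x, hx, y, hy, rfl⟩ := hg'
    obtain ⟨k, rfl⟩ := Subgroup.mem_zpowers_iff.mp hy
    have hxKS : x ∈ KS := sup_le ha_le hC_le hx
    have h0 : (0:ℤ) ≤ k % 4 := Int.emod_nonneg k (by norm_num)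
    have h4 : k % 4 < 4 := Int.emod_lt_of_pos k (by norm_num)
    refine ⟨x, hxKS, (k % 4).toNat, by omega, ?_⟩
    have hbk : b ^ k = b ^ ((k % 4).toNat) := by
      have h1 : b ^ (k % (orderOf b : ℤ)) = b ^ k := zpow_mod_orderOf b k
      rw [hb] at h1
      rw [← h1, ← zpow_natCast b ((k % 4).toNat), Int.toNat_of_nonneg h0]
      norm_num
    rw [hbk]
  -- classification of element orders
  have L1 : ∀ g : G, g ^ 4 = 1 ∨ g ^ 6 = 1 ∨ (g ∈ KS ∧ g ^ 15 = 1) := by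
    intro g
    obtain ⟨x, hx, j, hj, rfl⟩ := hdec g
    interval_cases j
    · right; right
      rw [pow_zero, mul_one]
      exact ⟨hx, hK15 x hx⟩
    · left
      have e2 : (x * b ^ 1) ^ 2 = x ^ 9 * b ^ 2 := by
        rw [pow_one, pow_two]
        calc x*b*(x*b) = x*(b*x)*b := by group
          _ = x*(x^8*b)*b := by rw [s1 x hx]
          _ = (x*x^8)*(b*b) := by group
          _ = x^9*b^2 := by rw [← pow_succ', ← pow_two]
      calc (x*b^1)^4 = ((x*b^1)^2)^2 := by rw [← pow_mul]
        _ = (x^9*b^2)^2 := by rw [e2]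
        _ = x^9*(b^2*x^9)*b^2 := by rw [pow_two]; group
        _ = x^9*((x^9)^4*b^2)*b^2 := by rw [s2 _ (pow_mem hx 9)]
        _ = (x^9*(x^9)^4)*(b^2*b^2) := by group
        _ = x^45*b^4 := by rw [← pow_mul, ← pow_add, ← pow_add]
        _ = 1 := by
            rw [show (45:ℕ) = 15*3 from rfl, pow_mul, hK15 x hx, one_pow, hb4, one_mul]
    · right; left
      have e2 : (x * b ^ 2) ^ 2 = x ^ 5 := by
        rw [pow_two]
        calc x*b^2*(x*b^2) = x*(b^2*x)*b^2 := by group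
          _ = x*(x^4*b^2)*b^2 := by rw [s2 x hx]
          _ = (x*x^4)*(b^2*b^2) := by group
          _ = x^5*b^4 := by rw [← pow_succ', ← pow_add]
          _ = x^5 := by rw [hb4, mul_one]
      calc (x*b^2)^6 = ((x*b^2)^2)^3 := by rw [← pow_mul]
        _ = (x^5)^3 := by rw [e2]
        _ = 1 := by rw [← pow_mul]; exact hK15 x hx
    · left
      have e2 : (x * b ^ 3) ^ 2 = x ^ 3 * b ^ 2 := by
        rw [pow_two]
        calc x*b^3*(x*b^3) = x*(b^3*x)*b^3 := by group
          _ = x*(x^2*b^3)*b^3 := by rw [s3 x hx]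
          _ = (x*x^2)*(b^3*b^3) := by group
          _ = x^3*b^6 := by rw [← pow_succ', ← pow_add]
        rw [show (6:ℕ)=4+2 from rfl, pow_add, hb4, one_mul]
      calc (x*b^3)^4 = ((x*b^3)^2)^2 := by rw [← pow_mul]
        _ = (x^3*b^2)^2 := by rw [e2]
        _ = x^3*(b^2*x^3)*b^2 := by rw [pow_two]; group
        _ = x^3*((x^3)^4*b^2)*b^2 := by rw [s2 _ (pow_mem hx 3)]
        _ = (x^3*(x^3)^4)*(b^2*b^2) := by group
        _ = x^15*b^4 := by rw [← pow_mul, ← pow_add, ← pow_add]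
        _ = 1 := by rw [hK15 x hx, hb4, one_mul]
  -- elements with x^5 = 1 are in zpowers a
  have L2 : ∀ x : G, x ^ 5 = 1 → x ∈ Subgroup.zpowers a := by
    intro x h5
    rcases L1 x with h4 | h6 | ⟨hk, _⟩
    · have hd : orderOf x ∣ Nat.gcd 4 5 :=
        Nat.dvd_gcd (orderOf_dvd_of_pow_eq_one h4) (orderOf_dvd_of_pow_eq_one h5)
      norm_num at hd
      rw [hd]
      exact Subgroup.one_mem _
    · have hd : orderOf x ∣ Nat.gcd 6 5 :=
        Nat.dvd_gcd (orderOf_dvd_of_pow_eq_one h6) (orderOf_dvd_of_pow_eq_one h5)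
      norm_num at hd
      rw [hd]
      exact Subgroup.one_mem _
    · obtain ⟨i, c, hc, rfl⟩ := hk
      have hc5 : c ^ 5 = 1 := by
        rw [(hcomm c hc i).mul_pow, hazn, one_mul] at h5
        exact h5
      have hc2' : c ^ 2 = 1 := by
        have : c ^ 5 = c ^ 3 * c ^ 2 := by rw [← pow_add]
        rw [hc5, hC3 c hc, one_mul] at this
        exact this.symm
      have hc1 : c = 1 := by
        have : c ^ 3 = c ^ 2 * c := by rw [← pow_succ]
        rw [hC3 c hc, hc2', one_mul] at this
        exact this.symm
      rw [hc1, mul_one]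
      exact Subgroup.mem_zpowers_iff.mpr ⟨i, rfl⟩
  have hamem : ∀ x ∈ Subgroup.zpowers a, x ^ 5 = 1 := by
    intro x hx
    obtain ⟨i, rfl⟩ := Subgroup.mem_zpowers_iff.mp hx
    exact hazn i
  -- normality of zpowers a
  have hanormal : (Subgroup.zpowers a).Normal := by
    constructor
    intro n hn g
    refine L2 _ ?_
    have h1 : (g * n * g⁻¹) ^ 5 = g * n ^ 5 * g⁻¹ := conj_pow
    rw [h1, hamem n hn, mul_one, mul_inv_cancel]
  -- solvability
  have solv : IsSolvable G := by
    have hKSK : KS ≤ Subgroup.zpowers a ⊔ C := by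
      rintro _ ⟨i, c, hc, rfl⟩
      exact Subgroup.mul_mem _ (Subgroup.mem_sup_left (Subgroup.mem_zpowers_iff.mpr ⟨i, rfl⟩))
        (Subgroup.mem_sup_right hc)
    haveI hKsolv : IsSolvable ↥(Subgroup.zpowers a ⊔ C) := by
      apply isSolvable_of_comm
      rintro ⟨x, hx⟩ ⟨y, hy⟩
      have hx' := ha_le.trans' (le_refl _) -- dummy
      obtain ⟨i, c, hc, hxe⟩ := sup_le ha_le hC_le hx
      obtain ⟨j, d, hd, hye⟩ := sup_le ha_le hC_le hy
      apply Subtype.ext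
      show x * y = y * x
      rw [hxe, hye, hmul2 i j c d hc hd, hmul2 j i d c hd hc, add_comm, hCcomm c hc d hd]
    haveI hbsolv : IsSolvable ↥(Subgroup.zpowers b) := by
      apply isSolvable_of_comm
      rintro ⟨x, hx⟩ ⟨y, hy⟩
      obtain ⟨i, rfl⟩ := Subgroup.mem_zpowers_iff.mp hx
      obtain ⟨j, rfl⟩ := Subgroup.mem_zpowers_iff.mp hy
      apply Subtype.ext
      show b ^ i * b ^ j = b ^ j * b ^ i
      rw [← zpow_add, ← zpow_add, add_comm]
    haveI hQsolv : IsSolvable (G ⧸ (Subgroup.zpowers a ⊔ C)) := by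
      apply solvable_of_surjective (G := ↥(Subgroup.zpowers b))
        (f := (QuotientGroup.mk' (Subgroup.zpowers a ⊔ C)).comp (Subgroup.subtype _))
      intro y
      induction y using QuotientGroup.induction_on with
      | _ g =>
        obtain ⟨x, hxKS, j, hj, rfl⟩ := hdec g
        refine ⟨⟨b ^ j, Subgroup.mem_zpowers_iff.mpr ⟨(j:ℤ), zpow_natCast b j⟩⟩, ?_⟩
        show QuotientGroup.mk (b ^ j) = QuotientGroup.mk (x * b ^ j)
        rw [QuotientGroup.mk_mul]
        have : (QuotientGroup.mk x : G ⧸ (Subgroup.zpowers a ⊔ C)) = 1 :=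
          (QuotientGroup.eq_one_iff x).mpr (hKSK hxKS)
        rw [this, one_mul]
    exact solvable_of_ker_le_range (Subgroup.zpowers a ⊔ C).subtype
      (QuotientGroup.mk' (Subgroup.zpowers a ⊔ C))
      (by rw [QuotientGroup.ker_mk', Subgroup.range_subtype]) (hG' := hKsolv) (hG'' := hQsolv)
  -- Sylow
  have sylow5 : ∃ P : Sylow 5 G, (P : Subgroup G) = Subgroup.zpowers a := by
    have hPa : IsPGroup 5 (Subgroup.zpowers a) := by
      rintro ⟨x, hx⟩
      refine ⟨1, ?_⟩
      apply Subtype.ext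
      rw [pow_one]
      show x ^ 5 = 1
      exact hamem x hx
    obtain ⟨P, hP⟩ := hPa.exists_le_sylow
    refine ⟨P, le_antisymm ?_ hP⟩
    intro x hxP
    obtain ⟨n, hn⟩ := P.2 ⟨x, hxP⟩
    have hxn : x ^ (5:ℕ) ^ n = 1 := by
      have := congrArg (Subgroup.subtype P.toSubgroup) hn
      simpa using this
    refine L2 x ?_
    have hd5 : orderOf x ∣ 5 ^ n := orderOf_dvd_of_pow_eq_one hxn
    rcases L1 x with h4 | h6 | ⟨_, h15⟩
    · have hcop : Nat.Coprime (5 ^ n) 4 := Nat.Coprime.pow_left n (by norm_num)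
      have : orderOf x ∣ 1 := (Nat.dvd_gcd hd5 (orderOf_dvd_of_pow_eq_one h4)).trans
        (by rw [Nat.coprime_iff_gcd_eq_one.mp hcop])
      rw [orderOf_eq_one_iff.mp (Nat.dvd_one.mp this), one_pow]
    · have hcop : Nat.Coprime (5 ^ n) 6 := Nat.Coprime.pow_left n (by norm_num)
      have : orderOf x ∣ 1 := (Nat.dvd_gcd hd5 (orderOf_dvd_of_pow_eq_one h6)).trans
        (by rw [Nat.coprime_iff_gcd_eq_one.mp hcop])
      rw [orderOf_eq_one_iff.mp (Nat.dvd_one.mp this), one_pow]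
    · obtain ⟨j, hjn, hdj⟩ := (Nat.dvd_prime_pow (by norm_num : Nat.Prime 5)).mp hd5
      have hj1 : j ≤ 1 := by
        by_contra hcon
        have h2 : (5:ℕ) ^ 2 ∣ 5 ^ j := pow_dvd_pow 5 (by omega)
        have : (5:ℕ) ^ 2 ∣ 15 := h2.trans (hdj ▸ orderOf_dvd_of_pow_eq_one h15)
        norm_num at this
      have : orderOf x ∣ 5 := hdj ▸ (pow_dvd_pow 5 hj1).trans (by norm_num)
      exact orderOf_dvd_iff_pow_eq_one.mp this
  -- part 3
  have part3 : ∀ p : ℕ, p.Prime → (∃ g : G, orderOf g = p) → p = 2 ∨ p = 3 ∨ p = 5 := by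
    rintro p hp ⟨g, hg⟩
    rcases L1 g with h | h | ⟨_, h⟩
    · have hdvd : p ∣ 4 := hg ▸ orderOf_dvd_of_pow_eq_one h
      have h2 := hp.two_le
      have hle : p ≤ 4 := Nat.le_of_dvd (by norm_num) hdvd
      interval_cases p <;> revert hdvd <;> revert hp <;> decide
    · have hdvd : p ∣ 6 := hg ▸ orderOf_dvd_of_pow_eq_one h
      have h2 := hp.two_le
      have hle : p ≤ 6 := Nat.le_of_dvd (by norm_num) hdvd
      interval_cases p <;> revert hdvd <;> revert hp <;> decide
    · have hdvd : p ∣ 15 := hg ▸ orderOf_dvd_of_pow_eq_one h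
      have h2 := hp.two_le
      have hle : p ≤ 15 := Nat.le_of_dvd (by norm_num) hdvd
      interval_cases p <;> revert hdvd <;> revert hp <;> decide
  -- part 4
  have part4 : ∀ p q : ℕ, p.Prime → q.Prime → p < q → (∃ g : G, orderOf g = p * q) →
      (p = 2 ∧ q = 3) ∨ (p = 3 ∧ q = 5) := by
    rintro p q hp hq hlt ⟨g, hg⟩
    have hp2 := hp.two_le
    have hq2 := hq.two_le
    rcases L1 g with h | h | ⟨_, h⟩ <;>
      [ (have hdvd : p * q ∣ 4 := hg ▸ orderOf_dvd_of_pow_eq_one h;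
         have hle : p * q ≤ 15 := le_trans (Nat.le_of_dvd (by norm_num) hdvd) (by norm_num));
        (have hdvd : p * q ∣ 6 := hg ▸ orderOf_dvd_of_pow_eq_one h;
         have hle : p * q ≤ 15 := le_trans (Nat.le_of_dvd (by norm_num) hdvd) (by norm_num));
        (have hdvd : p * q ∣ 15 := hg ▸ orderOf_dvd_of_pow_eq_one h;
         have hle : p * q ≤ 15 := Nat.le_of_dvd (by norm_num) hdvd)] <;>
    · have hple : p ≤ 3 := by nlinarith
      have hqle : q ≤ 7 := by nlinarith
      interval_cases p <;> interval_cases q <;> revert hdvd <;> revert hp hq <;> decide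
  -- cut group
  have cut : IsCutGroup G := by
    intro g h hzp
    have hmemg : h ∈ Subgroup.zpowers g := hzp ▸ Subgroup.mem_zpowers h
    obtain ⟨k, hk⟩ := Subgroup.mem_zpowers_iff.mp hmemg
    have horder : orderOf h = orderOf g := by
      rw [← Nat.card_zpowers, ← Nat.card_zpowers, hzp]
    have hnpos0 : 0 < orderOf g := orderOf_pos g
    obtain ⟨n, hndef⟩ : ∃ n, orderOf g = n := ⟨_, rfl⟩
    have hnpos : 0 < n := hndef ▸ hnpos0
    have hgn : g ^ n = 1 := hndef ▸ pow_orderOf_eq_one g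
    have h0 : (0:ℤ) ≤ k % (n:ℤ) := Int.emod_nonneg k (by exact_mod_cast hnpos.ne')
    have hkn : k % (n:ℤ) < (n:ℤ) := Int.emod_lt_of_pos k (by exact_mod_cast hnpos)
    obtain ⟨m, hmdef⟩ : ∃ m, (k % (n:ℤ)).toNat = m := ⟨_, rfl⟩
    have hmlt : m < n := by omega
    have hk' : h = g ^ m := by
      rw [← hk]
      have e1 : ((m:ℤ)) = k % (n:ℤ) := by omega
      have e2 := zpow_mod_orderOf g k
      rw [hndef] at e2
      rw [← zpow_natCast g m, e1, e2]
    have hgcd : Nat.gcd n m = 1 := by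
      have ho : orderOf (g ^ m) = n := by rw [← hk', horder]; exact hndef
      rw [orderOf_pow, hndef] at ho
      rcases Nat.div_eq_self.mp ho with h' | h'
      · omega
      · exact h'
    subst hk'
    have einv : ∀ (u : G) (n' : ℕ), u ^ (n' + 1) = 1 → u ^ n' = u⁻¹ := fun u n' hu =>
      eq_inv_of_mul_eq_one_left (by rw [← pow_succ]; exact hu)
    have hinv : ∀ x y : G, IsConj x y → IsConj x⁻¹ y⁻¹ := by
      rintro x y ⟨c, hc⟩
      exact ⟨c, SemiconjBy.inv_right_iff.mpr hc⟩
    rcases L1 g with h4 | h6 | ⟨hKg, h15⟩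
    · have hnd : n ∣ 4 := hndef ▸ orderOf_dvd_of_pow_eq_one h4
      have hn4 : n ≤ 4 := Nat.le_of_dvd (by norm_num) hnd
      interval_cases n
      · left
        have hg1 : g = 1 := orderOf_eq_one_iff.mp hndef
        interval_cases m
        rw [hg1, pow_zero]
      · interval_cases m
        · norm_num at hgcd
        · left; rw [pow_one]
      · omega
      · interval_cases m
        · norm_num at hgcd
        · left; rw [pow_one]
        · norm_num at hgcd
        · right; rw [einv g 3 hgn]
    · have hnd : n ∣ 6 := hndef ▸ orderOf_dvd_of_pow_eq_one h6
      have hn6 : n ≤ 6 := Nat.le_of_dvd (by norm_num) hnd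
      interval_cases n
      · left
        have hg1 : g = 1 := orderOf_eq_one_iff.mp hndef
        interval_cases m
        rw [hg1, pow_zero]
      · interval_cases m
        · norm_num at hgcd
        · left; rw [pow_one]
      · interval_cases m
        · norm_num at hgcd
        · left; rw [pow_one]
        · right; rw [einv g 2 hgn]
      · omega
      · omega
      · interval_cases m
        · norm_num at hgcd
        · left; rw [pow_one]
        · norm_num at hgcd
        · norm_num at hgcd
        · norm_num at hgcd
        · right; rw [einv g 5 hgn]
    · have hnd : n ∣ 15 := hndef ▸ orderOf_dvd_of_pow_eq_one h15
      have hcj : ∀ x ∈ KS, IsConj x (x ^ 2) := fun x hx =>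
        isConj_iff.mpr ⟨b⁻¹, by rw [inv_inv]; exact hsq x hx⟩
      have cj2 : IsConj g (g ^ 2) := hcj g hKg
      have cj4 : IsConj g (g ^ 4) := by
        have h' := hcj (g ^ 2) (pow_mem hKg 2)
        rw [← pow_mul, show 2*2 = 4 from rfl] at h'
        exact cj2.trans h'
      have cj8 : IsConj g (g ^ 8) := by
        have h' := hcj (g ^ 4) (pow_mem hKg 4)
        rw [← pow_mul, show 4*2 = 8 from rfl] at h'
        exact cj4.trans h'
      have hn15 : n ≤ 15 := Nat.le_of_dvd (by norm_num) hnd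
      interval_cases n
      · left
        have hg1 : g = 1 := orderOf_eq_one_iff.mp hndef
        interval_cases m
        rw [hg1, pow_zero]
      · omega
      · interval_cases m
        · norm_num at hgcd
        · left; rw [pow_one]
        · right; rw [einv g 2 hgn]
      · omega
      · interval_cases m
        · norm_num at hgcd
        · left; rw [pow_one]
        · left; exact cj2
        · left
          have e : g ^ 8 = g ^ 3 := by
            rw [show (8:ℕ) = 3 + 5 from rfl, pow_add, hgn, mul_one]
          rw [← e]; exact cj8
        · right; rw [einv g 4 hgn]
      · omega
      · omega
      · omega
      · omega
      · omega
      · omega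
      · omega
      · omega
      · omega
      · interval_cases m
        · norm_num at hgcd
        · left; rw [pow_one]
        · left; exact cj2
        · norm_num at hgcd
        · left; exact cj4
        · norm_num at hgcd
        · norm_num at hgcd
        · right
          have e : g ^ 7 = (g ^ 8)⁻¹ :=
            eq_inv_of_mul_eq_one_left (by rw [← pow_add]; exact hgn)
          rw [e]; exact hinv _ _ cj8
        · left; exact cj8
        · norm_num at hgcd
        · norm_num at hgcd
        · right
          have e : g ^ 11 = (g ^ 4)⁻¹ :=
            eq_inv_of_mul_eq_one_left (by rw [← pow_add]; exact hgn)
          rw [e]; exact hinv _ _ cj4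
        · norm_num at hgcd
        · right
          have e : g ^ 13 = (g ^ 2)⁻¹ :=
            eq_inv_of_mul_eq_one_left (by rw [← pow_add]; exact hgn)
          rw [e]; exact hinv _ _ cj2
        · right; rw [einv g 14 hgn]
  refine ⟨solv, ?_, part3, part4, cut⟩
  obtain ⟨P, hP⟩ := sylow5
  exact ⟨P, hP, hanormal⟩
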